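/- Let f, g : ℝ⁴ → ℝ be homogeneous quadratic polynomials, f(x) = Σ_{1 ≤ i ≤ j ≤ 4} c_{ij} x_i x_j and g(x) = Σ_{1 ≤ i ≤ j ≤ 4} c'_{ij} x_i x_j. Then for every pair 1 ≤ i ≤ j ≤ 4, |c_{ij} − c'_{ij}| ≤ 6⁴ · ( E_{x ∼ Unif({0,1,2}⁴)}[ (f(x) − g(x))² ] )^{1/2}. -/

import Mathlib

theorem sum4_aux (F : Fin 4 → Fin 4 → ℝ) :
    ∑ a : Fin 4, ∑ b ∈ Finset.Ici a, F a b =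
      F 0 0 + F 0 1 + F 0 2 + F 0 3 + (F 1 1 + F 1 2 + F 1 3) + (F 2 2 + F 2 3) + F 3 3 := by
  rw [Fin.sum_univ_four]
  rw [show Finset.Ici (0:Fin 4) = {0,1,2,3} from rfl,
      show Finset.Ici (1:Fin 4) = {1,2,3} from rfl,
      show Finset.Ici (2:Fin 4) = {2,3} from rfl,
      show Finset.Ici (3:Fin 4) = {3} from rfl]
  rw [Finset.sum_insert (by decide), Finset.sum_insert (by decide), Finset.sum_insert (by decide),
      Finset.sum_insert (by decide), Finset.sum_insert (by decide), Finset.sum_insert (by decide),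
      Finset.sum_singleton, Finset.sum_singleton, Finset.sum_singleton, Finset.sum_singleton]
  ring

/-- **Coefficient recovery for homogeneous quadratics (Step 2 of the NFA/FACT separation
proof).** If `f(x) = ∑_{1 ≤ i ≤ j ≤ 4} c_{ij} x_i x_j` and
`g(x) = ∑_{1 ≤ i ≤ j ≤ 4} c'_{ij} x_i x_j`, then each coefficient difference is bounded by
`6⁴` times the `L²(Unif({0,1,2}⁴))` distance between `f` and `g`. -/
theorem quadratic_coefficient_recovery
    (f g : (Fin 4 → ℝ) → ℝ) (c c' : Fin 4 → Fin 4 → ℝ)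
    (hf : ∀ x : Fin 4 → ℝ, f x = ∑ i : Fin 4, ∑ j ∈ Finset.Ici i, c i j * (x i * x j))
    (hg : ∀ x : Fin 4 → ℝ, g x = ∑ i : Fin 4, ∑ j ∈ Finset.Ici i, c' i j * (x i * x j)) :
    ∀ i j : Fin 4, i ≤ j →
      |c i j - c' i j| ≤ 6 ^ 4 *
        Real.sqrt ((1 / 81 : ℝ) * ∑ x : Fin 4 → Fin 3,
          (f (fun i => ((x i : ℕ) : ℝ)) - g (fun i => ((x i : ℕ) : ℝ))) ^ 2) := by
  have hSnn : (0:ℝ) ≤ (1 / 81 : ℝ) * ∑ x : Fin 4 → Fin 3,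
      (f (fun i => ((x i : ℕ) : ℝ)) - g (fun i => ((x i : ℕ) : ℝ))) ^ 2 := by
    positivity
  set Sig : ℝ := ∑ x : Fin 4 → Fin 3,
      (f (fun i => ((x i : ℕ) : ℝ)) - g (fun i => ((x i : ℕ) : ℝ))) ^ 2 with hSig
  set S : ℝ := Real.sqrt ((1 / 81 : ℝ) * Sig) with hS
  have hS0 : 0 ≤ S := Real.sqrt_nonneg _
  have hval : ∀ x : Fin 4 → ℝ,
      f x - g x = ∑ a : Fin 4, ∑ b ∈ Finset.Ici a, (c a b - c' a b) * (x a * x b) := by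
    intro x
    rw [hf, hg, ← Finset.sum_sub_distrib]
    refine Finset.sum_congr rfl fun a _ => ?_
    rw [← Finset.sum_sub_distrib]
    exact Finset.sum_congr rfl fun b _ => by ring
  have key : ∀ v : Fin 4 → Fin 3,
      |∑ a : Fin 4, ∑ b ∈ Finset.Ici a,
        (c a b - c' a b) * (((v a : ℕ) : ℝ) * ((v b : ℕ) : ℝ))| ≤ 9 * S := by
    intro v
    rw [← hval (fun k => ((v k : ℕ) : ℝ))]
    have h1 : (f (fun k => ((v k : ℕ) : ℝ)) - g (fun k => ((v k : ℕ) : ℝ))) ^ 2 ≤ Sig := by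
      rw [hSig]
      exact Finset.single_le_sum
        (f := fun x : Fin 4 → Fin 3 =>
          (f (fun i => ((x i : ℕ) : ℝ)) - g (fun i => ((x i : ℕ) : ℝ))) ^ 2)
        (fun _ _ => sq_nonneg _) (Finset.mem_univ v)
    have hsq : (9 * S) ^ 2 = Sig := by
      rw [hS, mul_pow, Real.sq_sqrt hSnn]
      ring
    have h2 : (f (fun k => ((v k : ℕ) : ℝ)) - g (fun k => ((v k : ℕ) : ℝ))) ^ 2 ≤ (9 * S) ^ 2 := by
      rw [hsq]; exact h1
    calc |f (fun k => ((v k : ℕ):ℝ)) - g (fun k => ((v k : ℕ):ℝ))|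
        = Real.sqrt ((f (fun k => ((v k : ℕ):ℝ)) - g (fun k => ((v k : ℕ):ℝ))) ^ 2) :=
          (Real.sqrt_sq_eq_abs _).symm
      _ ≤ Real.sqrt ((9 * S) ^ 2) := Real.sqrt_le_sqrt h2
      _ = 9 * S := Real.sqrt_sq (by positivity)
  intro i j hij
  rw [show ((6:ℝ) ^ 4) = 1296 by norm_num]
  fin_cases i <;> fin_cases j
  · have A := key ![1,0,0,0]
    rw [sum4_aux] at A
    norm_num [Matrix.cons_val_two, Matrix.cons_val_three, Matrix.cons_val_succ'] at A
    have goal : |c 0 0 - c' 0 0| ≤ 1296 * S := by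
      rw [abs_le] at A ⊢
      constructor <;> linarith
    exact goal
  · have A := key ![1,1,0,0]
    have B := key ![1,0,0,0]
    have C := key ![0,1,0,0]
    rw [sum4_aux] at A B C
    norm_num [Matrix.cons_val_two, Matrix.cons_val_three, Matrix.cons_val_succ'] at A B C
    have goal : |c 0 1 - c' 0 1| ≤ 1296 * S := by
      rw [abs_le] at A B C ⊢
      constructor <;> linarith
    exact goal
  · have A := key ![1,0,1,0]
    have B := key ![1,0,0,0]
    have C := key ![0,0,1,0]
    rw [sum4_aux] at A B C
    norm_num [Matrix.cons_val_two, Matrix.cons_val_three, Matrix.cons_val_succ'] at A B C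
    have goal : |c 0 2 - c' 0 2| ≤ 1296 * S := by
      rw [abs_le] at A B C ⊢
      constructor <;> linarith
    exact goal
  · have A := key ![1,0,0,1]
    have B := key ![1,0,0,0]
    have C := key ![0,0,0,1]
    rw [sum4_aux] at A B C
    norm_num [Matrix.cons_val_two, Matrix.cons_val_three, Matrix.cons_val_succ'] at A B C
    have goal : |c 0 3 - c' 0 3| ≤ 1296 * S := by
      rw [abs_le] at A B C ⊢
      constructor <;> linarith
    exact goal
  · exact absurd hij (by decide)
  · have A := key ![0,1,0,0]
    rw [sum4_aux] at A
    norm_num [Matrix.cons_val_two, Matrix.cons_val_three, Matrix.cons_val_succ'] at A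
    have goal : |c 1 1 - c' 1 1| ≤ 1296 * S := by
      rw [abs_le] at A ⊢
      constructor <;> linarith
    exact goal
  · have A := key ![0,1,1,0]
    have B := key ![0,1,0,0]
    have C := key ![0,0,1,0]
    rw [sum4_aux] at A B C
    norm_num [Matrix.cons_val_two, Matrix.cons_val_three, Matrix.cons_val_succ'] at A B C
    have goal : |c 1 2 - c' 1 2| ≤ 1296 * S := by
      rw [abs_le] at A B C ⊢
      constructor <;> linarith
    exact goal
  · have A := key ![0,1,0,1]
    have B := key ![0,1,0,0]
    have C := key ![0,0,0,1]
    rw [sum4_aux] at A B C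
    norm_num [Matrix.cons_val_two, Matrix.cons_val_three, Matrix.cons_val_succ'] at A B C
    have goal : |c 1 3 - c' 1 3| ≤ 1296 * S := by
      rw [abs_le] at A B C ⊢
      constructor <;> linarith
    exact goal
  · exact absurd hij (by decide)
  · exact absurd hij (by decide)
  · have A := key ![0,0,1,0]
    rw [sum4_aux] at A
    norm_num [Matrix.cons_val_two, Matrix.cons_val_three, Matrix.cons_val_succ'] at A
    have goal : |c 2 2 - c' 2 2| ≤ 1296 * S := by
      rw [abs_le] at A ⊢
      constructor <;> linarith
    exact goal
  · have A := key ![0,0,1,1]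
    have B := key ![0,0,1,0]
    have C := key ![0,0,0,1]
    rw [sum4_aux] at A B C
    norm_num [Matrix.cons_val_two, Matrix.cons_val_three, Matrix.cons_val_succ'] at A B C
    have goal : |c 2 3 - c' 2 3| ≤ 1296 * S := by
      rw [abs_le] at A B C ⊢
      constructor <;> linarith
    exact goal
  · exact absurd hij (by decide)
  · exact absurd hij (by decide)
  · exact absurd hij (by decide)
  · have A := key ![0,0,0,1]
    rw [sum4_aux] at A
    norm_num [Matrix.cons_val_two, Matrix.cons_val_three, Matrix.cons_val_succ'] at A
    have goal : |c 3 3 - c' 3 3| ≤ 1296 * S := by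
      rw [abs_le] at A ⊢
      constructor <;> linarith
    exact goal
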